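/- For every rhythm a ∈ R_N^n with 2 ≤ n ≤ N, the discrete average transformation Rav(a) again belongs to R_N^n; that is, Rav(a) has pairwise distinct entries and satisfies Σ_{i=0}^{n−1} (Rav(a)_{⟨i+1⟩_n} −_N Rav(a)_i) = N. -/

import Mathlib

namespace Rhythm

/-- `a +_N b`, addition on `Z_N = {0,…,N−1}`. -/
def addN (N a b : ℕ) : ℕ := (a + b) % N

/-- `a −_N b`, subtraction on `Z_N = {0,…,N−1}`. -/
def subN (N a b : ℕ) : ℕ := (a + N - b) % N

/-- The discrete average `av(a,b) = a +_N ⌊(b −_N a)/2⌋`. -/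
def av (N a b : ℕ) : ℕ := addN N a (subN N b a / 2)

/-- The cyclic interval `[a,b]_{Z_N}`. -/
def cyclicIcc (N a b : ℕ) : Finset ℕ :=
  if a ≤ b then Finset.Icc a b else Finset.Icc a (N - 1) ∪ Finset.Icc 0 b

/-- The half-open cyclic interval `[a,b)_{Z_N} = [a,b]_{Z_N} \ {b}`. -/
def cyclicIco (N a b : ℕ) : Finset ℕ := (cyclicIcc N a b).erase b

/-- The half-open cyclic interval `(a,b]_{Z_N} = [a,b]_{Z_N} \ {a}`. -/
def cyclicIoc (N a b : ℕ) : Finset ℕ := (cyclicIcc N a b).erase a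

/-- Cyclic successor `⟨i+1⟩_n` on `Fin n`. -/
def csucc {n : ℕ} (i : Fin n) : Fin n := ⟨(i.val + 1) % n, Nat.mod_lt _ i.pos⟩

/-- Cyclic predecessor `⟨i−1⟩_n` on `Fin n`. -/
def cpred {n : ℕ} (i : Fin n) : Fin n := ⟨(i.val + (n - 1)) % n, Nat.mod_lt _ i.pos⟩

/-- `a ∈ R_N^n`: entries in `Z_N`, pairwise distinct, and `Σ_i (a_{⟨i+1⟩_n} −_N a_i) = N`. -/
def IsRhythm (N : ℕ) {n : ℕ} (a : Fin n → ℕ) : Prop :=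
  (∀ i, a i < N) ∧ Function.Injective a ∧ (∑ i, subN N (a (csucc i)) (a i)) = N

/-- The discrete average transformation `Rav`. -/
def Rav (N : ℕ) {n : ℕ} (a : Fin n → ℕ) : Fin n → ℕ := fun i => av N (a i) (a (csucc i))

/-- The rotation `rot(a_0,…,a_{n−1}) = (a_{n−1},a_0,…,a_{n−2})`. -/
def rot {n : ℕ} (a : Fin n → ℕ) : Fin n → ℕ := fun i => a (cpred i)

/-- The translation `tr(a_0,…,a_{n−1}) = (a_0 +_N 1,…,a_{n−1} +_N 1)`. -/
def tr (N : ℕ) {n : ℕ} (a : Fin n → ℕ) : Fin n → ℕ := fun i => addN N (a i) 1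

/-- `j` is the jumping number of `a`: `a_{⟨j−1⟩_n} > a_j` and `a_{⟨k−1⟩_n} < a_k` for `k ≠ j`. -/
def IsJump {n : ℕ} (a : Fin n → ℕ) (j : Fin n) : Prop :=
  a (cpred j) > a j ∧ ∀ k, k ≠ j → a (cpred k) < a k

/-- The map `Iav`: for `n ≥ 2` it is `Rav` if `a` is proper (`N − a_{n−1} > a_0`) and
`rot ∘ Rav` otherwise; for `n ≤ 1` it is the identity. -/
def Iav (N : ℕ) {n : ℕ} (a : Fin n → ℕ) : Fin n → ℕ :=
  if h : 2 ≤ n then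
    if N - a ⟨n - 1, by omega⟩ > a ⟨0, by omega⟩ then Rav N a else rot (Rav N a)
  else a

/-- The support of a Boolean vector `v ∈ F_2^N`. -/
def supp (N : ℕ) (v : Fin N → ZMod 2) : Finset (Fin N) :=
  Finset.univ.filter fun i => v i = 1

/-- `BtoI(v)`: the increasing enumeration of the support of `v`. -/
def BtoI (N : ℕ) (v : Fin N → ZMod 2) : Fin (supp N v).card → ℕ :=
  fun i => (((supp N v).orderIsoOfFin rfl) i).1.val

/-- `ItoB(b)`: the characteristic vector of the set of entries of the tuple `b`. -/
def ItoB (N : ℕ) {n : ℕ} (b : Fin n → ℕ) : Fin N → ZMod 2 :=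
  fun i => if ∃ k, b k = i.val then 1 else 0

/-- The Boolean average `Bav = ItoB ∘ Iav ∘ BtoI : B_N → B_N`. -/
def Bav (N : ℕ) (v : Fin N → ZMod 2) : Fin N → ZMod 2 :=
  ItoB N (Iav N (BtoI N v))

/-- The cyclic shift `Btr(v_0,…,v_{N−1}) = (v_{N−1},v_0,…,v_{N−2})`. -/
def Btr (N : ℕ) (v : Fin N → ZMod 2) : Fin N → ZMod 2 := fun i => v (cpred i)

/-- `Par_N`: the set of parental pairs of zero, i.e. pairs `(a,b) ∈ Z_N × Z_N` with `av(a,b) = 0`. -/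
def Par (N : ℕ) : Finset (ℕ × ℕ) :=
  (Finset.range N ×ˢ Finset.range N).filter fun p => av N p.1 p.2 = 0

/-- The least absolute remainder `φ_N(i) ∈ Z_{N,±}` of `i ∈ Z_N`. -/
def toSigned (N : ℕ) (i : Fin N) : ℤ :=
  if (i : ℕ) ≤ N / 2 then (i : ℤ) else (i : ℤ) - N

/-- `G_N(y) = Bav_N^0(v)` where `v_{⟨j⟩_N} = 1 + y_j` for `j ∈ Z_{N,±}`. -/
def G (N : ℕ) (y : ℤ → ZMod 2) : ZMod 2 :=
  if h : 0 < N then Bav N (fun i => 1 + y (toSigned N i)) ⟨0, h⟩ else 0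

end Rhythm

section Aux
open Rhythm Finset

variable {N n : ℕ}

lemma zmod_cast_inj (hN : 0 < N) {u v : ℕ} (hu : u < N) (hv : v < N)
    (h : (u : ZMod N) = v) : u = v := by
  haveI : NeZero N := ⟨hN.ne'⟩
  rw [← ZMod.val_cast_of_lt hu, ← ZMod.val_cast_of_lt hv, h]

lemma subN_lt (hN : 0 < N) (x y : ℕ) : subN N x y < N := Nat.mod_lt _ hN

lemma subN_cast {y : ℕ} (hy : y ≤ N) (x : ℕ) :
    ((subN N x y : ℕ) : ZMod N) = (x : ZMod N) - y := by
  have h : y ≤ x + N := by omega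
  unfold Rhythm.subN
  rw [ZMod.natCast_mod, Nat.cast_sub h]
  push_cast [ZMod.natCast_self]
  ring

lemma addN_cast (a b : ℕ) : ((addN N a b : ℕ) : ZMod N) = (a : ZMod N) + b := by
  unfold Rhythm.addN
  rw [ZMod.natCast_mod]; push_cast; ring

lemma subN_eq_of (hN : 0 < N) {x y u : ℕ} (hy : y < N) (hu : u < N)
    (h : (x : ZMod N) - y = (u : ZMod N)) : subN N x y = u := by
  apply zmod_cast_inj hN (subN_lt hN x y) hu
  rw [subN_cast hy.le, h]

lemma csucc_ne (hn : 2 ≤ n) (i : Fin n) : csucc i ≠ i := by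
  intro h
  have hv : (i.val + 1) % n = i.val := congrArg Fin.val h
  have hi := i.isLt
  rcases Nat.lt_or_ge (i.val + 1) n with h1 | h1
  · rw [Nat.mod_eq_of_lt h1] at hv; omega
  · have h2 : i.val + 1 = n := by omega
    rw [h2, Nat.mod_self] at hv; omega

lemma csucc_eq_add_one [NeZero n] (hn : 2 ≤ n) (i : Fin n) : csucc i = i + 1 := by
  apply Fin.ext
  rw [Fin.val_add, Fin.val_one']
  simp [csucc, Nat.mod_eq_of_lt (show 1 < n by omega)]

lemma sum_comp_csucc [NeZero n] (hn : 2 ≤ n) (f : Fin n → ℕ) :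
    ∑ i, f (csucc i) = ∑ i, f i := by
  have h1 : ∑ i, f (csucc i) = ∑ i, f (i + 1) := by
    apply Finset.sum_congr rfl
    intro i _; rw [csucc_eq_add_one hn]
  rw [h1]
  exact Fintype.sum_equiv (Equiv.addRight (1 : Fin n)) _ _ (fun i => rfl)

end Aux

open Fin.NatCast

open Rhythm in
/-- For every rhythm `a ∈ R_N^n` with `2 ≤ n ≤ N`, the discrete average transformation
`Rav(a)` again belongs to `R_N^n`: it has entries in `Z_N`, pairwise distinct entries, and
satisfies `Σ_{i=0}^{n−1} (Rav(a)_{⟨i+1⟩_n} −_N Rav(a)_i) = N`. -/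
theorem Rav_mem_rhythms (N : ℕ) (hN : 3 ≤ N) (n : ℕ) (hn : 2 ≤ n) (hnN : n ≤ N)
    (a : Fin n → ℕ) (ha : IsRhythm N a) :
    IsRhythm N (Rav N a) := by
  obtain ⟨hlt, hinj, hsum⟩ := ha
  have hN0 : 0 < N := by omega
  haveI : NeZero n := ⟨by omega⟩
  set b : Fin n → ℕ := Rav N a with hbdef
  set d : Fin n → ℕ := fun i => subN N (a (csucc i)) (a i) with hddef
  have hd_lt : ∀ i, d i < N := fun i => subN_lt hN0 _ _
  have hd_pos : ∀ i, 1 ≤ d i := by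
    intro i
    by_contra h
    have h0 : (a (csucc i) + N - a i) % N = 0 := by
      have : d i = 0 := by omega
      simpa [hddef, Rhythm.subN] using this
    have h1 := hlt (csucc i)
    have h2 := hlt i
    rcases le_or_gt (a i) (a (csucc i)) with hc | hc
    · have hrw : a (csucc i) + N - a i = (a (csucc i) - a i) + N := by omega
      rw [hrw, Nat.add_mod_right, Nat.mod_eq_of_lt (by omega)] at h0
      have heq : a (csucc i) = a i := by omega
      exact csucc_ne hn i (hinj heq)
    · rw [Nat.mod_eq_of_lt (by omega)] at h0
      omega
  set e : Fin n → ℕ := fun i => (d i - d i / 2) + d (csucc i) / 2 with hedef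
  have he_pos : ∀ i, 1 ≤ e i := by
    intro i
    have := hd_pos i
    simp only [hedef]
    omega
  have he_ltN : ∀ i, e i < N := by
    intro i
    have h1 := hd_lt i
    have h2 := hd_lt (csucc i)
    simp only [hedef]
    omega
  have hb_lt : ∀ i, b i < N := fun i => Nat.mod_lt _ hN0
  have hb_cast : ∀ i, (b i : ZMod N) = (a i : ZMod N) + ((d i / 2 : ℕ) : ZMod N) := by
    intro i
    show ((addN N (a i) (d i / 2) : ℕ) : ZMod N) = _
    rw [addN_cast]
  have hd_cast : ∀ i, ((d i : ℕ) : ZMod N) = (a (csucc i) : ZMod N) - a i :=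
    fun i => subN_cast (hlt i).le _
  have he_cast : ∀ i, ((e i : ℕ) : ZMod N)
      = (d i : ZMod N) - ((d i / 2 : ℕ) : ZMod N) + ((d (csucc i) / 2 : ℕ) : ZMod N) := by
    intro i
    show (((d i - d i / 2) + d (csucc i) / 2 : ℕ) : ZMod N) = _
    rw [Nat.cast_add, Nat.cast_sub (Nat.div_le_self _ _)]
  have he_gap : ∀ i, subN N (b (csucc i)) (b i) = e i := by
    intro i
    apply subN_eq_of hN0 (hb_lt i) (he_ltN i)
    rw [hb_cast, hb_cast, he_cast, hd_cast]
    ring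
  have hesum : ∑ i, e i = N := by
    have h1 : ∑ i, e i = ∑ i, (d i - d i / 2) + ∑ i, d (csucc i) / 2 :=
      Finset.sum_add_distrib
    have h2 : ∑ i, d (csucc i) / 2 = ∑ i, d i / 2 :=
      sum_comp_csucc hn (fun j => d j / 2)
    have h3 : ∑ i, (d i - d i / 2) + ∑ i, d i / 2 = ∑ i, d i := by
      rw [← Finset.sum_add_distrib]
      apply Finset.sum_congr rfl
      intro i _
      have := Nat.div_le_self (d i) 2
      omega
    rw [h1, h2, h3]
    exact hsum
  -- partial sums
  set E : ℕ → ℕ := fun m => e ((m : ℕ) : Fin n) with hEdef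
  set P : ℕ → ℕ := fun m => ∑ j ∈ Finset.range m, E j with hPdef
  have hPmono : StrictMono P := by
    apply strictMono_nat_of_lt_succ
    intro m
    have h1 : P (m + 1) = P m + E m := Finset.sum_range_succ E m
    rw [h1]
    exact Nat.lt_add_of_pos_right (he_pos _)
  have hPn : P n = N := by
    have h1 : ∑ j ∈ Finset.range n, E j = ∑ i : Fin n, E i.val :=
      (Fin.sum_univ_eq_sum_range E n).symm
    have h2 : ∑ i : Fin n, E i.val = ∑ i, e i := by
      apply Finset.sum_congr rfl
      intro i _
      simp [hEdef, Fin.cast_val_eq_self]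
    simp only [hPdef]
    rw [h1, h2, hesum]
  have hPlt : ∀ m, m < n → P m < N := by
    intro m hm
    exact hPn ▸ hPmono hm
  have key : ∀ m, m < n → (b ((m : ℕ) : Fin n) : ZMod N)
      = (b ((0 : ℕ) : Fin n) : ZMod N) + (P m : ZMod N) := by
    intro m
    induction m with
    | zero => intro _; simp [hPdef]
    | succ m ih =>
      intro hm
      have hm' : m < n := by omega
      have hcs : csucc ((m : ℕ) : Fin n) = ((m + 1 : ℕ) : Fin n) := by
        apply Fin.ext
        show ((((m : ℕ) : Fin n)).val + 1) % n = (((m + 1 : ℕ) : Fin n)).val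
        rw [Fin.val_cast_of_lt hm', Fin.val_cast_of_lt hm, Nat.mod_eq_of_lt hm]
      have hg := he_gap ((m : ℕ) : Fin n)
      have hcast : ((e ((m : ℕ) : Fin n) : ℕ) : ZMod N)
          = (b (csucc ((m : ℕ) : Fin n)) : ZMod N) - b ((m : ℕ) : Fin n) := by
        rw [← hg, subN_cast (hb_lt _).le]
      rw [hcs] at hcast
      have hb1 : (b ((m + 1 : ℕ) : Fin n) : ZMod N)
          = (b ((m : ℕ) : Fin n) : ZMod N) + (e ((m : ℕ) : Fin n) : ZMod N) := by
        rw [hcast]; ring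
      have hPs : P (m + 1) = P m + E m := Finset.sum_range_succ E m
      rw [hb1, ih hm', hPs]
      have hEc : ((P m + E m : ℕ) : ZMod N)
          = (P m : ZMod N) + ((e ((m : ℕ) : Fin n) : ℕ) : ZMod N) := by
        push_cast
        ring
      rw [hEc]
      ring
  refine ⟨hb_lt, ?_, ?_⟩
  · intro i j hij
    have hi := key i.val i.isLt
    have hj := key j.val j.isLt
    rw [Fin.cast_val_eq_self] at hi hj
    have hbij : (b i : ZMod N) = (b j : ZMod N) := by rw [hij]
    rw [hi, hj] at hbij
    have hP : (P i.val : ZMod N) = (P j.val : ZMod N) := by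
      exact add_left_cancel hbij
    have hPeq : P i.val = P j.val :=
      zmod_cast_inj hN0 (hPlt _ i.isLt) (hPlt _ j.isLt) hP
    have : i.val = j.val := hPmono.injective hPeq
    exact Fin.ext this
  · calc ∑ i, subN N (b (csucc i)) (b i) = ∑ i, e i :=
          Finset.sum_congr rfl (fun i _ => he_gap i)
      _ = N := hesum
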